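/- Let ε, μ : [0,∞) → ℝ be continuous and differentiable at 0, with ε(0) = μ(0) = 0. Set E(r) = ∫₀ʳ ε(s) ds, and suppose that for every t > 0 both ∫₀ᵗ e^{−2E(r)}·(μ(r) − ε(r)) dr ≥ 0 and ∫₀ᵗ e^{−2E(r)}·(μ(r) + ε(r)) dr ≥ 0. Then μ′(0) ≥ |ε′(0)|. -/

import Mathlib

open Set MeasureTheory intervalIntegral Filter

lemma aux_nonneg (ε k : ℝ → ℝ) (c : ℝ)
    (hε : ContinuousOn ε (Set.Ici 0)) (hk : ContinuousOn k (Set.Ici 0))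
    (hk' : HasDerivWithinAt k c (Set.Ici 0) 0) (hk0 : k 0 = 0)
    (h : ∀ t > (0:ℝ),
      0 ≤ ∫ r in (0:ℝ)..t, Real.exp (-2 * ∫ s in (0:ℝ)..r, ε s) * k r) :
    0 ≤ c := by
  by_contra hc
  push_neg at hc
  set E : ℝ → ℝ := fun r => ∫ s in (0:ℝ)..r, ε s with hE
  -- little-o bound
  have h1 : ∀ᶠ x in nhdsWithin 0 (Set.Ici 0),
      ‖k x - k 0 - (x - 0) • c‖ ≤ (-c/2) * ‖x - 0‖ :=
    (hasDerivWithinAt_iff_isLittleO.mp hk').bound (by linarith)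
  -- continuity of E on [0,1]
  have hEcont : ContinuousOn E (Set.Icc (0:ℝ) 1) := by
    have hint : IntegrableOn ε (Set.uIcc (0:ℝ) 1) volume := by
      apply ContinuousOn.integrableOn_compact isCompact_uIcc
      apply hε.mono
      rw [Set.uIcc_of_le (by norm_num : (0:ℝ) ≤ 1)]
      exact fun x hx => hx.1
    simpa [Set.uIcc_of_le (by norm_num : (0:ℝ) ≤ 1)] using
      intervalIntegral.continuousOn_primitive_interval hint
  have hE0 : E 0 = 0 := by simp [hE]
  have hexp_cont : ContinuousWithinAt (fun r => Real.exp (-2 * E r)) (Set.Icc (0:ℝ) 1) 0 :=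
    Real.continuous_exp.continuousAt.comp_continuousWithinAt
      (continuousWithinAt_const.mul (hEcont 0 (by norm_num)))
  have h2 : ∀ᶠ x in nhdsWithin 0 (Set.Ici 0),
      (1:ℝ)/2 ≤ Real.exp (-2 * E x) := by
    rw [← nhdsWithin_Icc_eq_nhdsGE (zero_lt_one (α := ℝ))]
    apply hexp_cont.eventually (p := fun y => (1:ℝ)/2 ≤ y)
    rw [show ((fun r => Real.exp (-2 * E r)) 0) = 1 by simp [hE0]]
    filter_upwards [isOpen_Ioi.mem_nhds (show (1:ℝ)/2 < 1 by norm_num)] with y hy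
    exact le_of_lt hy
  -- extract δ
  obtain ⟨δ₀, hδ₀, hball⟩ := Metric.mem_nhdsWithin_iff.mp (h1.and h2)
  set δ : ℝ := min (δ₀ / 2) (1 / 2) with hδdef
  have hδpos : 0 < δ := by positivity
  have hδle : δ ≤ 1 := le_trans (min_le_right _ _) (by norm_num)
  have hkey : ∀ r ∈ Set.Icc (0:ℝ) δ,
      Real.exp (-2 * E r) * k r ≤ (c/4) * r := by
    intro r ⟨hr0, hrδ⟩
    have hmem : r ∈ Metric.ball (0:ℝ) δ₀ ∩ Set.Ici 0 := by
      constructor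
      · simp only [Metric.mem_ball, Real.dist_eq, sub_zero]
        rw [abs_of_nonneg hr0]
        calc r ≤ δ := hrδ
          _ ≤ δ₀ / 2 := min_le_left _ _
          _ < δ₀ := by linarith
      · exact hr0
    obtain ⟨hb1, hb2⟩ := hball hmem
    simp only [hk0, sub_zero, smul_eq_mul, Real.norm_eq_abs, abs_of_nonneg hr0] at hb1
    have hkr : k r ≤ (c/2) * r := by
      have := abs_le.mp hb1
      nlinarith [this.2]
    have hkr0 : k r ≤ 0 := le_trans hkr (by nlinarith)
    calc Real.exp (-2 * E r) * k r ≤ (1/2) * k r := by nlinarith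
      _ ≤ (1/2) * ((c/2) * r) := by linarith
      _ = (c/4) * r := by ring
  -- compare integrals
  have hEcont' : ContinuousOn E (Set.Icc (0:ℝ) δ) :=
    hEcont.mono (Set.Icc_subset_Icc_right hδle)
  have hgcont : ContinuousOn (fun r => Real.exp (-2 * E r) * k r) (Set.Icc (0:ℝ) δ) := by
    apply ContinuousOn.mul
    · exact Real.continuous_exp.comp_continuousOn (continuousOn_const.mul hEcont')
    · exact hk.mono (fun x hx => hx.1)
  have hgint : IntervalIntegrable (fun r => Real.exp (-2 * E r) * k r) volume 0 δ := by
    apply ContinuousOn.intervalIntegrable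
    rwa [Set.uIcc_of_le hδpos.le]
  have hlin : IntervalIntegrable (fun r => (c/4) * r) volume 0 δ :=
    (continuous_const.mul continuous_id).intervalIntegrable _ _
  have hmono : (∫ r in (0:ℝ)..δ, Real.exp (-2 * E r) * k r) ≤
      ∫ r in (0:ℝ)..δ, (c/4) * r :=
    intervalIntegral.integral_mono_on hδpos.le hgint hlin hkey
  have hval : (∫ r in (0:ℝ)..δ, (c/4) * r) = (c/4) * (δ^2 / 2) := by
    rw [intervalIntegral.integral_const_mul, integral_id]
    ring
  have hneg : (c/4) * (δ^2 / 2) < 0 := by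
    have hδ2 : 0 < δ^2 := by positivity
    nlinarith
  have h0 := h δ hδpos
  rw [hval] at hmono
  linarith

theorem initial_speed_in_cp_region (ε μ : ℝ → ℝ) (ε'0 μ'0 : ℝ)
    (hε : ContinuousOn ε (Set.Ici 0)) (hμ : ContinuousOn μ (Set.Ici 0))
    (hε' : HasDerivWithinAt ε ε'0 (Set.Ici 0) 0)
    (hμ' : HasDerivWithinAt μ μ'0 (Set.Ici 0) 0)
    (hε0 : ε 0 = 0) (hμ0 : μ 0 = 0)
    (h₁ : ∀ t > (0:ℝ),
      0 ≤ ∫ r in (0:ℝ)..t, Real.exp (-2 * ∫ s in (0:ℝ)..r, ε s) * (μ r - ε r))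
    (h₂ : ∀ t > (0:ℝ),
      0 ≤ ∫ r in (0:ℝ)..t, Real.exp (-2 * ∫ s in (0:ℝ)..r, ε s) * (μ r + ε r)) :
    |ε'0| ≤ μ'0 := by
  have hA : 0 ≤ μ'0 - ε'0 :=
    aux_nonneg ε (fun r => μ r - ε r) (μ'0 - ε'0) hε (hμ.sub hε)
      (hμ'.sub hε') (by simp [hμ0, hε0]) h₁
  have hB : 0 ≤ μ'0 + ε'0 :=
    aux_nonneg ε (fun r => μ r + ε r) (μ'0 + ε'0) hε (hμ.add hε)
      (hμ'.add hε') (by simp [hμ0, hε0]) h₂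
  rw [abs_le]
  constructor <;> linarith
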